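/- Let S be a semidomain. The units of the Laurent polynomial semidomain S[x^{±1}] are exactly the elements u·x^n with u a unit of S and n an integer. -/

import Mathlib

open Polynomial

/-- A witness that the commutative semiring `S` embeds into an integral domain. -/
structure SemidomainWitness (S : Type) [CommSemiring S] : Type 1 where
  R : Type
  [commRing : CommRing R]
  [isDomain : IsDomain R]
  f : S →+* R
  inj : Function.Injective f

/-- A semidomain is a commutative semiring that embeds into an integral domain. -/
def IsSemidomain (S : Type) [CommSemiring S] : Prop :=
  Nonempty (SemidomainWitness S)

namespace Stmt4Aux

open LaurentPolynomial

/-- Divisors of `X ^ k` in a domain are `C u * X ^ i` with `u` a unit. -/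
lemma dvd_X_pow {R : Type} [CommRing R] [IsDomain R] :
    ∀ (k : ℕ) (p q : R[X]), p * q = X ^ k →
      ∃ u i, IsUnit u ∧ p = Polynomial.C u * X ^ i := by
  intro k
  induction k with
  | zero =>
    intro p q h
    rw [pow_zero] at h
    obtain ⟨u, hu, hc⟩ := Polynomial.isUnit_iff.mp (IsUnit.of_mul_eq_one q h)
    exact ⟨u, 0, hu, by simp [hc]⟩
  | succ k ih =>
    intro p q h
    have hX : Prime (X : R[X]) := Polynomial.prime_X
    have hdvd : (X : R[X]) ∣ p * q := ⟨X ^ k, by rw [h, pow_succ]; ring⟩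
    rcases hX.2.2 p q hdvd with ⟨p', rfl⟩ | ⟨q', rfl⟩
    · have h' : p' * q = X ^ k := by
        apply mul_left_cancel₀ Polynomial.X_ne_zero
        linear_combination h
      obtain ⟨u, i, hu, hp'⟩ := ih p' q h'
      exact ⟨u, i + 1, hu, by rw [hp', pow_succ]; ring⟩
    · have h' : p * q' = X ^ k := by
        apply mul_left_cancel₀ Polynomial.X_ne_zero
        linear_combination h
      exact ih p q' h'

/-- Units in the Laurent polynomial ring over a domain. -/
lemma laurent_unit {R : Type} [CommRing R] [IsDomain R] (g : R[T;T⁻¹]) (hg : IsUnit g) :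
    ∃ u n, IsUnit u ∧ g = LaurentPolynomial.C u * T n := by
  obtain ⟨h, hgh⟩ := isUnit_iff_exists_inv.mp hg
  obtain ⟨n, p, hp⟩ := g.exists_T_pow
  obtain ⟨m, q, hq⟩ := h.exists_T_pow
  have key : toLaurent (p * q) = toLaurent (X ^ (n + m)) := by
    rw [map_mul, hp, hq, toLaurent_X_pow, mul_mul_mul_comm, hgh, one_mul, ← T_add]
    norm_cast
  have hpq : p * q = X ^ (n + m) := Polynomial.toLaurent_injective key
  obtain ⟨u, i, hu, hpC⟩ := dvd_X_pow (n + m) p q hpq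
  refine ⟨u, (i : ℤ) - n, hu, ?_⟩
  have hg' : g = toLaurent p * T (-(n : ℤ)) := by
    rw [hp, mul_assoc, ← T_add, add_neg_cancel, T_zero, mul_one]
  rw [hg', hpC, map_mul, Polynomial.toLaurent_C, toLaurent_X_pow, mul_assoc, ← T_add]
  congr 1

/-- The monoid hom `Multiplicative ℤ →* R[T;T⁻¹]` sending `n` to `T n`. -/
noncomputable def Tmh (R : Type) [CommSemiring R] : Multiplicative ℤ →* R[T;T⁻¹] where
  toFun z := T z.toAdd
  map_one' := T_zero
  map_mul' x y := T_add _ _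

/-- The "sum of coefficients" ring hom from Laurent polynomials. -/
noncomputable def sumCoeff (R : Type) [CommSemiring R] : R[T;T⁻¹] →+* R :=
  AddMonoidAlgebra.liftNCRingHom (RingHom.id R) 1 (fun _ _ => Commute.all _ _)

lemma sumCoeff_C {R : Type} [CommSemiring R] (a : R) :
    sumCoeff R (LaurentPolynomial.C a) = a := by
  show AddMonoidAlgebra.liftNC _ _ (AddMonoidAlgebra.single 0 a) = a
  rw [AddMonoidAlgebra.liftNC_single]
  simp

lemma sumCoeff_T {R : Type} [CommSemiring R] (n : ℤ) :
    sumCoeff R (T n : R[T;T⁻¹]) = 1 := by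
  show AddMonoidAlgebra.liftNC _ _ (AddMonoidAlgebra.single n 1) = 1
  rw [AddMonoidAlgebra.liftNC_single]
  simp

/-- Coefficient-wise map of Laurent polynomials along a ring hom. -/
noncomputable def mapCoeff {R R' : Type} [CommSemiring R] [CommSemiring R'] (φ : R →+* R') :
    R[T;T⁻¹] →+* R'[T;T⁻¹] :=
  AddMonoidAlgebra.liftNCRingHom (LaurentPolynomial.C.comp φ) (Tmh R')
    (fun _ _ => Commute.all _ _)

lemma mapCoeff_apply {R R' : Type} [CommSemiring R] [CommSemiring R'] (φ : R →+* R')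
    (g : R[T;T⁻¹]) : mapCoeff φ g = AddMonoidAlgebra.ofCoeff (Finsupp.mapRange φ φ.map_zero g.coeff) := by
  induction g using AddMonoidAlgebra.induction_linear with
  | zero => simp
  | add a b ha hb =>
    rw [map_add, ha, hb, AddMonoidAlgebra.coeff_add, Finsupp.mapRange_add φ.map_add]; rfl
  | single k a =>
    show AddMonoidAlgebra.liftNC _ _ (AddMonoidAlgebra.single k a) = _
    rw [AddMonoidAlgebra.liftNC_single, AddMonoidAlgebra.coeff_single, Finsupp.mapRange_single]
    show LaurentPolynomial.C (φ a) * T k = _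
    exact (single_eq_C_mul_T _ _).symm

end Stmt4Aux

open Stmt4Aux LaurentPolynomial

/-- For a semidomain `S`, the units of the Laurent polynomial semidomain `S[x^{±1}]` are exactly
the elements `u·xⁿ` with `u` a unit of `S` and `n ∈ ℤ`. -/
theorem stmt4 (S : Type) [CommSemiring S] (hS : IsSemidomain S) (f : LaurentPolynomial S) :
    IsUnit f ↔ ∃ (u : S) (n : ℤ), IsUnit u ∧ f = LaurentPolynomial.C u * LaurentPolynomial.T n := by
  constructor
  · intro hf
    obtain ⟨W⟩ := hS
    letI := W.commRing
    letI := W.isDomain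
    obtain ⟨u', n, hu', hfu⟩ := laurent_unit (mapCoeff W.f f) (hf.map (mapCoeff W.f))
    -- f has support contained in {n}
    have hsingle : f = AddMonoidAlgebra.single n (f.coeff n) := by
      ext k
      rcases eq_or_ne k n with rfl | hk
      · rw [AddMonoidAlgebra.coeff_single, Finsupp.single_eq_same]
      · rw [AddMonoidAlgebra.coeff_single, Finsupp.single_apply, if_neg (Ne.symm hk)]
        have := congrArg (fun g => g.coeff k) ((mapCoeff_apply W.f f).symm.trans hfu)
        simp only [AddMonoidAlgebra.coeff_ofCoeff, Finsupp.mapRange_apply] at this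
        rw [← single_eq_C_mul_T, AddMonoidAlgebra.coeff_single, Finsupp.single_apply, if_neg (Ne.symm hk)] at this
        exact W.inj (by rw [this, map_zero])
    have hfC : f = LaurentPolynomial.C (f.coeff n) * T n := by
      conv_lhs => rw [hsingle]
      exact single_eq_C_mul_T (f.coeff n) n
    refine ⟨f.coeff n, n, ?_, hfC⟩
    have := (hf.map (sumCoeff S))
    rw [hfC, map_mul, sumCoeff_C, sumCoeff_T, mul_one] at this
    exact this
  · rintro ⟨u, n, hu, rfl⟩
    exact (hu.map LaurentPolynomial.C).mul (isUnit_T n)
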